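/- Let R be a commutative Artinian ring with identity. Then the comaximal ideal graph CIG(R) is a complemented graph, and consequently a uniquely complemented graph. -/

import Mathlib

namespace CIG

variable (R : Type*) [CommRing R]

variable {R} in
/-- Vertices of the comaximal ideal graph `CIG(R)`: proper ideals not contained in
the Jacobson radical `J(R)`. -/
def IsVertex (I : Ideal R) : Prop :=
  I ≠ ⊤ ∧ ¬ I ≤ (⊥ : Ideal R).jacobson

variable {R} in
/-- Adjacency in `CIG(R)`: distinct vertices `I`, `J` with `I + J = R`. -/
def Adj (I J : Ideal R) : Prop :=
  I ≠ J ∧ IsVertex I ∧ IsVertex J ∧ I ⊔ J = ⊤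

variable {R} in
/-- `J` is a complement of `I` in `CIG(R)`: they are adjacent and no vertex is
adjacent to both. -/
def IsComplementOf (I J : Ideal R) : Prop :=
  Adj I J ∧ ∀ K : Ideal R, ¬ (Adj K I ∧ Adj K J)

/-- `CIG(R)` is complemented. -/
def Complemented : Prop :=
  ∀ I : Ideal R, IsVertex I → ∃ J : Ideal R, IsComplementOf I J

/-- `CIG(R)` is uniquely complemented. -/
def UniquelyComplemented : Prop :=
  Complemented R ∧
    ∀ I J K : Ideal R, IsComplementOf I J → IsComplementOf I K →
      ∀ M : Ideal R, (Adj M J ↔ Adj M K)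

end CIG

section Aux

open CIG

variable {R : Type*} [CommRing R]

lemma aux_maximal_sup {m X : Ideal R} (hm : m.IsMaximal) (h : ¬ X ≤ m) : m ⊔ X = ⊤ := by
  by_contra hne
  exact h (le_sup_right.trans (hm.eq_of_le hne le_sup_left).symm.le)

lemma aux_sup_sInf_eq_top {I : Ideal R} {S : Set (Ideal R)} (hS : S.Finite)
    (h : ∀ m ∈ S, I ⊔ m = ⊤) : I ⊔ sInf S = ⊤ := by
  revert h
  refine Set.Finite.induction_on S hS (fun _ => by simp) ?_
  intro a s _ _ ih h
  have h1 : IsCoprime I a := Ideal.isCoprime_iff_sup_eq.mpr (h a (Set.mem_insert a s))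
  have h2 : IsCoprime I (sInf s) :=
    Ideal.isCoprime_iff_sup_eq.mpr (ih fun m hm => h m (Set.mem_insert_of_mem a hm))
  rw [sInf_insert]
  refine eq_top_iff.mpr ?_
  calc (⊤ : Ideal R) = I ⊔ a * sInf s := ((h1.mul_right h2).sup_eq).symm
    _ ≤ I ⊔ (a ⊓ sInf s) := sup_le_sup_left Ideal.mul_le_inf I

lemma aux_exists_maximal_not_le {I : Ideal R} (hI : IsVertex I) :
    ∃ m : Ideal R, m.IsMaximal ∧ ¬ I ≤ m := by
  by_contra h
  push_neg at h
  exact hI.2 (le_sInf fun m hm => h m hm.2)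

/-- A maximal ideal not containing some vertex is itself a vertex. -/
lemma aux_maximal_isVertex {I m : Ideal R} (hI : IsVertex I) (hm : m.IsMaximal)
    (hIm : ¬ I ≤ m) : IsVertex m := by
  refine ⟨hm.ne_top, fun hle => ?_⟩
  obtain ⟨m', hm', hIm'⟩ := Ideal.exists_le_maximal I hI.1
  have : m ≤ m' := hle.trans (sInf_le ⟨bot_le, hm'⟩)
  have : m = m' := hm.eq_of_le hm'.ne_top this
  exact hIm (this ▸ hIm')

/-- Characterization of neighbours of a complement of `I`. -/
lemma aux_adj_complement_iff {I J M : Ideal R} (hI : IsVertex I)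
    (h : IsComplementOf I J) :
    Adj M J ↔ IsVertex M ∧ ∀ m : Ideal R, m.IsMaximal → M ≤ m → I ≤ m := by
  have hJ : IsVertex J := h.1.2.2.1
  have hIJ : I ⊔ J = ⊤ := h.1.2.2.2
  -- every maximal ideal either contains I or contains J, not both
  have key : ∀ m : Ideal R, m.IsMaximal → (¬ I ≤ m → J ≤ m) := by
    intro m hm hIm
    by_contra hJm
    have hmv : IsVertex m := aux_maximal_isVertex hI hm hIm
    exact h.2 m ⟨⟨fun e => hIm (e ▸ le_refl m), hmv, hI, aux_maximal_sup hm hIm⟩,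
      ⟨fun e => hJm (e ▸ le_refl m), hmv, hJ, aux_maximal_sup hm hJm⟩⟩
  constructor
  · rintro ⟨hMJ, hM, -, hsup⟩
    refine ⟨hM, fun m hm hMm => ?_⟩
    by_contra hIm
    have hJm : J ≤ m := key m hm hIm
    exact hm.ne_top (top_le_iff.mp (hsup ▸ sup_le hMm hJm))
  · rintro ⟨hM, hall⟩
    have hsup : M ⊔ J = ⊤ := by
      by_contra hne
      obtain ⟨m, hm, hle⟩ := Ideal.exists_le_maximal _ hne
      have hIm : I ≤ m := hall m hm (le_sup_left.trans hle)
      have hJm : J ≤ m := le_sup_right.trans hle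
      exact hm.ne_top (top_le_iff.mp (hIJ ▸ sup_le hIm hJm))
    have hMJ : M ≠ J := by
      rintro rfl
      obtain ⟨m, hm, hle⟩ := Ideal.exists_le_maximal M hM.1
      exact hm.ne_top (top_le_iff.mp ((hIJ ▸ sup_le (hall m hm hle) hle)))
    exact ⟨hMJ, hM, hJ, hsup⟩

end Aux

open CIG in
/-- For a commutative Artinian ring `R` with identity, the comaximal
ideal graph `CIG(R)` is complemented, and consequently uniquely complemented. -/
theorem stmt_15 (R : Type*) [CommRing R] [IsArtinianRing R] :
    Complemented R ∧ UniquelyComplemented R := by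
  have hcompl : Complemented R := by
    intro I hI
    set S : Set (Ideal R) := {m | m.IsMaximal ∧ ¬ I ≤ m} with hSdef
    have hSfin : S.Finite :=
      (IsArtinianRing.setOfPred_isMaximal_finite R).subset fun m hm => hm.1
    obtain ⟨m₁, hm₁, hIm₁⟩ := aux_exists_maximal_not_le hI
    have hm₁S : m₁ ∈ S := ⟨hm₁, hIm₁⟩
    refine ⟨sInf S, ?_, ?_⟩
    · -- adjacency
      have hsup : I ⊔ sInf S = ⊤ :=
        aux_sup_sInf_eq_top hSfin fun m hm =>
          (sup_comm I m).trans (aux_maximal_sup hm.1 hm.2)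
      have hSv : IsVertex (sInf S) := by
        constructor
        · intro htop
          exact hm₁.ne_top (top_le_iff.mp (htop ▸ sInf_le hm₁S))
        · obtain ⟨m₀, hm₀, hIm₀⟩ := Ideal.exists_le_maximal I hI.1
          have hsup₀ : m₀ ⊔ sInf S = ⊤ := by
            refine aux_sup_sInf_eq_top hSfin fun m hm => ?_
            refine aux_maximal_sup hm₀ fun hle => ?_
            exact hm.2 (by rw [hm.1.eq_of_le hm₀.ne_top hle]; exact hIm₀)
          intro hjac
          have : sInf S ≤ m₀ := hjac.trans (sInf_le ⟨bot_le, hm₀⟩)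
          exact hm₀.ne_top (top_le_iff.mp (hsup₀ ▸ sup_le le_rfl this))
      refine ⟨?_, hI, hSv, hsup⟩
      intro e
      exact hI.1 (by rw [← hsup, e, sup_idem])
    · -- no common neighbour
      rintro K ⟨⟨_, hK, -, hKI⟩, ⟨_, -, -, hKS⟩⟩
      obtain ⟨m, hm, hKm⟩ := Ideal.exists_le_maximal K hK.1
      by_cases hIm : I ≤ m
      · exact hm.ne_top (top_le_iff.mp (hKI ▸ sup_le hKm hIm))
      · exact hm.ne_top (top_le_iff.mp (hKS ▸ sup_le hKm (sInf_le ⟨hm, hIm⟩)))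
  refine ⟨hcompl, hcompl, ?_⟩
  intro I J K hJ hK M
  have hI : IsVertex I := hJ.1.2.1
  rw [aux_adj_complement_iff hI hJ, aux_adj_complement_iff hI hK]
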